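/- Let F be a field, let n ≥ 1, let Q be an invertible symmetric n × n matrix over F, and let P be an n × n matrix over F satisfying Pᵀ · Q · P = Q. Then P is invertible, and for every nonzero t ∈ F, det(P - t·I) = tⁿ · det(-P⁻¹) · det(P - t⁻¹·I). -/

import Mathlib

open Matrix in
theorem isometry_char_poly_symmetric (F : Type*) [Field F] (n : ℕ) (hn : 1 ≤ n)
    (Q P : Matrix (Fin n) (Fin n) F) (hQsymm : Qᵀ = Q) (hQ : IsUnit Q.det)
    (hP : Pᵀ * Q * P = Q) :
    IsUnit P.det ∧ ∀ t : F, t ≠ 0 →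
      (P - t • (1 : Matrix (Fin n) (Fin n) F)).det =
        t ^ n * (-P⁻¹).det * (P - t⁻¹ • (1 : Matrix (Fin n) (Fin n) F)).det := by
  have h1 := congrArg Matrix.det hP
  simp only [Matrix.det_mul, Matrix.det_transpose] at h1
  have hQd : Q.det ≠ 0 := hQ.ne_zero
  have hPP : P.det * P.det = 1 := by
    have h2 : P.det * P.det * Q.det = 1 * Q.det := by linear_combination h1
    exact mul_right_cancel₀ hQd h2
  have hPdet : IsUnit P.det := IsUnit.of_mul_eq_one _ hPP
  refine ⟨hPdet, fun t ht => ?_⟩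
  have hPinv : P * P⁻¹ = 1 := Matrix.mul_nonsing_inv P hPdet
  have hPinv' : P⁻¹ * P = 1 := Matrix.nonsing_inv_mul P hPdet
  have hQinv : Q * Q⁻¹ = 1 := Matrix.mul_nonsing_inv Q hQ
  -- Pᵀ = Q * P⁻¹ * Q⁻¹
  have hPT : Pᵀ = Q * P⁻¹ * Q⁻¹ := by
    have h2 : Pᵀ * Q = Q * P⁻¹ := by
      calc Pᵀ * Q = Pᵀ * Q * P * P⁻¹ := by rw [Matrix.mul_assoc, hPinv, Matrix.mul_one]
      _ = Q * P⁻¹ := by rw [hP]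
    calc Pᵀ = Pᵀ * Q * Q⁻¹ := by rw [Matrix.mul_assoc, hQinv, Matrix.mul_one]
    _ = Q * P⁻¹ * Q⁻¹ := by rw [h2]
  have key1 : (P - t • (1 : Matrix (Fin n) (Fin n) F)).det
      = (P⁻¹ - t • (1 : Matrix (Fin n) (Fin n) F)).det := by
    rw [← Matrix.det_transpose (P - t • 1)]
    have : (P - t • (1 : Matrix (Fin n) (Fin n) F))ᵀ
        = Q * (P⁻¹ - t • 1) * Q⁻¹ := by
      rw [Matrix.transpose_sub, hPT]
      have : (t • (1 : Matrix (Fin n) (Fin n) F))ᵀ = Q * (t • 1) * Q⁻¹ := by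
        rw [Matrix.transpose_smul, Matrix.transpose_one, Matrix.mul_smul,
          Matrix.mul_one, Matrix.smul_mul, hQinv]
      rw [this, Matrix.mul_sub, Matrix.sub_mul]
    rw [this, Matrix.det_mul, Matrix.det_mul, mul_comm,
      ← mul_assoc, ← Matrix.det_mul, Matrix.nonsing_inv_mul Q hQ, Matrix.det_one, one_mul]
  have key2 : P⁻¹ - t • (1 : Matrix (Fin n) (Fin n) F)
      = ((-t) • P⁻¹) * (P - t⁻¹ • 1) := by
    rw [Matrix.smul_mul, Matrix.mul_sub, hPinv', Matrix.mul_smul, Matrix.mul_one,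
      smul_sub, smul_smul]
    rw [neg_mul, mul_inv_cancel₀ ht]
    simp [sub_eq_add_neg, add_comm]
  rw [key1, key2, Matrix.det_mul, Matrix.det_smul, Matrix.det_neg, Fintype.card_fin]
  ring
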